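/- Let X be a finite set with a weight μ : X → [0,∞), let Y be a finite set with a lattice norm N on ℝ^Y, let K : X × Y^d → [0,∞) be a kernel which is symmetric in its Y-arguments, with associated positive multilinear operator T, and suppose T saturates X. Let 1 ≤ q < ∞ with conjugate exponent q', and let A, B > 0. Assume: (i) for all nonnegative f ∈ ℝ^Y, ‖T(f,…,f)^{1/d}‖_{L^q(μ)} ≤ A·N(f); and (ii) for every nonnegative f ∈ ℝ^Y there exists S : X × Y → [0,∞) such that K(x,y_1,…,y_d) ≤ S(x,y_1)⋯S(x,y_d) for all x, y_1, …, y_d, and (Σ_{y∈Y} S(x,y) f(y))^d ≤ B^d · T(f,…,f)(x) for all x ∈ X. Then for every M : X → [0,∞) with ‖M‖_{ℓ^{q'}(μ)} ≤ 1 there exists a single kernel g : X × Y → [0,∞) such that M(x)^d K(x,y_1,…,y_d) ≤ g(x,y_1)⋯g(x,y_d) for all x, y_1, …, y_d, and for every nonnegative f ∈ ℝ^Y, Σ_{x∈X} μ(x) Σ_{y∈Y} g(x,y) f(y) ≤ A·B·N(f). -/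

import Mathlib

open Finset

private lemma holder_w {ι : Type*} [Fintype ι] (w a b : ι → ℝ)
    (hw : ∀ i, 0 ≤ w i) (ha : ∀ i, 0 ≤ a i) (hb : ∀ i, 0 ≤ b i)
    {p q : ℝ} (hpq : Real.HolderConjugate p q) :
    ∑ i, w i * (a i * b i) ≤
      (∑ i, w i * a i ^ p) ^ (1/p) * (∑ i, w i * b i ^ q) ^ (1/q) := by
  have h := Real.inner_le_Lp_mul_Lq_of_nonneg (s := Finset.univ)
    (f := fun i => w i ^ (1/p) * a i) (g := fun i => w i ^ (1/q) * b i) hpq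
    (fun i _ => mul_nonneg (Real.rpow_nonneg (hw i) _) (ha i))
    (fun i _ => mul_nonneg (Real.rpow_nonneg (hw i) _) (hb i))
  have e1 : ∀ i : ι, (w i ^ (1/p) * a i) * (w i ^ (1/q) * b i) = w i * (a i * b i) := by
    intro i
    have hww : w i ^ (1/p) * w i ^ (1/q) = w i := by
      rw [← Real.rpow_add' (hw i) (by rw [one_div, one_div, hpq.inv_add_inv_eq_one]; norm_num),
        one_div, one_div, hpq.inv_add_inv_eq_one, Real.rpow_one]
    calc (w i ^ (1/p) * a i) * (w i ^ (1/q) * b i)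
        = (w i ^ (1/p) * w i ^ (1/q)) * (a i * b i) := by ring
      _ = w i * (a i * b i) := by rw [hww]
  have e2 : ∀ i : ι, (w i ^ (1/p) * a i) ^ p = w i * a i ^ p := by
    intro i
    rw [Real.mul_rpow (Real.rpow_nonneg (hw i) _) (ha i), ← Real.rpow_mul (hw i),
      one_div_mul_cancel hpq.pos.ne', Real.rpow_one]
  have e3 : ∀ i : ι, (w i ^ (1/q) * b i) ^ q = w i * b i ^ q := by
    intro i
    rw [Real.mul_rpow (Real.rpow_nonneg (hw i) _) (hb i), ← Real.rpow_mul (hw i),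
      one_div_mul_cancel hpq.symm.pos.ne', Real.rpow_one]
  simp_rw [e1, e2, e3] at h
  exact h

theorem multilinear_duality_symmetric
    (d : ℕ) (hd : 1 ≤ d)
    (X : Type*) [Fintype X] (μ : X → ℝ) (hμ : ∀ x, 0 ≤ μ x)
    (Y : Type*) [Fintype Y]
    -- lattice norm on ℝ^Y
    (N : (Y → ℝ) → ℝ)
    (hN_nonneg : ∀ f, 0 ≤ N f)
    (hN_add : ∀ f g, N (f + g) ≤ N f + N g)
    (hN_smul : ∀ (c : ℝ) f, N (c • f) = |c| * N f)
    (hN_defin : ∀ f, N f = 0 → f = 0)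
    (hN_lattice : ∀ f g, (∀ y, |f y| ≤ |g y|) → N f ≤ N g)
    -- nonnegative kernel, symmetric in its Y-arguments, and saturation
    (K : X → (Fin d → Y) → ℝ) (hK : ∀ x y, 0 ≤ K x y)
    (hsym : ∀ x (y : Fin d → Y) (σ : Equiv.Perm (Fin d)), K x (y ∘ σ) = K x y)
    (hsat : ∀ x, 0 < μ x → ∃ y, K x y ≠ 0)
    (q : ℝ) (hq : 1 ≤ q)
    (A B : ℝ) (hA : 0 < A) (hB : 0 < B)
    -- (i) diagonal main hypothesis: ‖T(f,…,f)^{1/d}‖_{L^q(μ)} ≤ A N(f)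
    (hmain : ∀ f : Y → ℝ, (∀ y, 0 ≤ f y) →
      (∑ x, μ x * (∑ y : Fin d → Y, K x y * ∏ j, f (y j)) ^ (q / d)) ^ (1 / q)
        ≤ A * N f)
    -- (ii) auxiliary structural hypothesis (symmetric version)
    (hstruct : ∀ f : Y → ℝ, (∀ y, 0 ≤ f y) →
      ∃ S : X → Y → ℝ,
        (∀ x y, 0 ≤ S x y) ∧
        (∀ x (y : Fin d → Y), K x y ≤ ∏ j, S x (y j)) ∧
        (∀ x, (∑ y, S x y * f y) ^ d ≤
          B ^ d * ∑ y : Fin d → Y, K x y * ∏ j, f (y j)))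
    -- M nonnegative with ‖M‖_{ℓ^{q'}(μ)} ≤ 1 (q' the conjugate exponent, max-norm when q = 1)
    (M : X → ℝ) (hM0 : ∀ x, 0 ≤ M x)
    (hM1 : q = 1 → ∀ x, M x ≤ 1)
    (hMq : 1 < q → (∑ x, μ x * M x ^ (q / (q - 1))) ^ ((q - 1) / q) ≤ 1) :
    ∃ g : X → Y → ℝ,
      (∀ x y, 0 ≤ g x y) ∧
      (∀ x (y : Fin d → Y), M x ^ d * K x y ≤ ∏ j, g x (y j)) ∧
      (∀ f : Y → ℝ, (∀ y, 0 ≤ f y) →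
        ∑ x, μ x * ∑ y, g x y * f y ≤ A * B * N f) := by
  classical
  have hcpos : (0:ℝ) < A * B := mul_pos hA hB
  rcases isEmpty_or_nonempty Y with hY | hY
  · refine ⟨fun _ _ => 0, fun _ _ => le_rfl, ?_, ?_⟩
    · intro x y; exact (hY.false (y ⟨0, hd⟩)).elim
    · intro f hf
      have : (Finset.univ : Finset Y) = ∅ := Finset.univ_eq_empty
      simp only [this, Finset.sum_empty, mul_zero, Finset.sum_const_zero]
      exact mul_nonneg hcpos.le (hN_nonneg f)
  have hd0 : 0 < d := hd
  have hdR : (0:ℝ) < (d:ℝ) := by exact_mod_cast hd0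
  -- STEP 1 : for each fixed nonnegative f there is an admissible g adapted to f
  have step1 : ∀ f : Y → ℝ, (∀ y, 0 ≤ f y) → ∃ g : X → Y → ℝ,
      (∀ x y, 0 ≤ g x y) ∧
      (∀ x (yv : Fin d → Y), M x ^ d * K x yv ≤ ∏ j, g x (yv j)) ∧
      ∑ x, μ x * ∑ y, g x y * f y ≤ A * B * N f := by
    intro f hf
    obtain ⟨S, hS0, hSK, hSB⟩ := hstruct f hf
    set s : X → ℝ := fun x => ∑ y, S x y * f y with hsdef
    have hs0 : ∀ x, 0 ≤ s x :=
      fun x => Finset.sum_nonneg fun y _ => mul_nonneg (hS0 x y) (hf y)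
    set Qf : X → ℝ := fun x => ∑ y : Fin d → Y, K x y * ∏ j, f (y j) with hQfdef
    have hQ0 : ∀ x, 0 ≤ Qf x := fun x =>
      Finset.sum_nonneg fun y _ => mul_nonneg (hK x y)
        (Finset.prod_nonneg fun j _ => hf (y j))
    have hQs : ∀ x, Qf x ≤ s x ^ d := by
      intro x
      have hid : s x ^ d = ∑ y : Fin d → Y, ∏ j, (S x (y j) * f (y j)) := by
        calc s x ^ d = ∏ _j : Fin d, s x := by
              rw [Finset.prod_const, Finset.card_univ, Fintype.card_fin]
          _ = ∑ y ∈ Fintype.piFinset (fun _ : Fin d => (Finset.univ : Finset Y)),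
                ∏ j, (S x (y j) * f (y j)) := by
              rw [hsdef]; exact Finset.prod_univ_sum _ _
          _ = ∑ y : Fin d → Y, ∏ j, (S x (y j) * f (y j)) := by
              rw [Fintype.piFinset_univ]
      rw [hid]
      refine Finset.sum_le_sum fun y _ => ?_
      rw [Finset.prod_mul_distrib]
      exact mul_le_mul_of_nonneg_right (hSK x y)
        (Finset.prod_nonneg fun j _ => hf (y j))
    set c : X → ℝ := fun x =>
      max 1 (s x ^ (d-1) / (B ^ (d-1) * Qf x ^ (((d:ℝ)-1)/(d:ℝ)))) with hcdef
    have hc1 : ∀ x, 1 ≤ c x := fun x => le_max_left _ _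
    have hroot : ∀ x, (Qf x ^ ((1:ℝ)/(d:ℝ))) ^ d = Qf x := by
      intro x
      rw [← Real.rpow_natCast (Qf x ^ ((1:ℝ)/(d:ℝ))) d, ← Real.rpow_mul (hQ0 x),
        one_div_mul_cancel hdR.ne', Real.rpow_one]
    have hkey : ∀ x, c x * s x ≤ B * Qf x ^ ((1:ℝ)/(d:ℝ)) := by
      intro x
      rcases eq_or_lt_of_le (hQ0 x) with hQe | hQp
      · have hsx : s x = 0 := by
          have h1 : s x ^ d ≤ 0 := by
            have := hSB x
            rw [hQfdef] at hQe
            simp only [] at hQe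
            rw [← hQe, mul_zero] at this
            exact this
          have h2 : 0 ≤ s x ^ d := pow_nonneg (hs0 x) d
          have h3 : s x ^ d = 0 := le_antisymm h1 h2
          exact pow_eq_zero_iff hd0.ne' |>.1 h3
        rw [hsx, mul_zero, ← hQe, Real.zero_rpow (by positivity), mul_zero]
      · have hsd : s x ≤ B * Qf x ^ ((1:ℝ)/(d:ℝ)) := by
          have hpow : s x ^ d ≤ (B * Qf x ^ ((1:ℝ)/(d:ℝ))) ^ d := by
            rw [mul_pow, hroot x]; exact hSB x
          exact (pow_le_pow_iff_left₀ (hs0 x)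
            (mul_nonneg hB.le (Real.rpow_nonneg (hQ0 x) _)) hd0.ne').1 hpow
        have hden : 0 < B ^ (d-1) * Qf x ^ (((d:ℝ)-1)/(d:ℝ)) :=
          mul_pos (pow_pos hB _) (Real.rpow_pos_of_pos hQp _)
        have h2 : s x ^ (d-1) / (B ^ (d-1) * Qf x ^ (((d:ℝ)-1)/(d:ℝ))) * s x
            ≤ B * Qf x ^ ((1:ℝ)/(d:ℝ)) := by
          rw [div_mul_eq_mul_div, ← pow_succ, Nat.sub_add_cancel hd, div_le_iff₀ hden]
          calc s x ^ d ≤ B ^ d * Qf x := hSB x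
            _ = B * Qf x ^ ((1:ℝ)/(d:ℝ)) * (B ^ (d-1) * Qf x ^ (((d:ℝ)-1)/(d:ℝ))) := by
                have hQsplit : Qf x ^ ((1:ℝ)/(d:ℝ)) * Qf x ^ (((d:ℝ)-1)/(d:ℝ)) = Qf x := by
                  rw [← Real.rpow_add hQp]
                  have hexp : (1:ℝ)/(d:ℝ) + ((d:ℝ)-1)/(d:ℝ) = 1 := by
                    field_simp
                    ring
                  rw [hexp, Real.rpow_one]
                have hBsplit : B * B ^ (d-1) = B ^ d := by
                  rw [← pow_succ', Nat.sub_add_cancel hd]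
                have hrr : B * Qf x ^ ((1:ℝ)/(d:ℝ)) * (B ^ (d-1) * Qf x ^ (((d:ℝ)-1)/(d:ℝ)))
                    = (B * B ^ (d-1)) * (Qf x ^ ((1:ℝ)/(d:ℝ)) * Qf x ^ (((d:ℝ)-1)/(d:ℝ))) := by
                  ring
                rw [hrr, hBsplit, hQsplit]
        rw [hcdef]
        simp only []
        rw [max_mul_of_nonneg _ _ (hs0 x), one_mul]
        exact max_le hsd h2
    -- Hölder / main hypothesis step
    have hmainM : ∑ x, μ x * (M x * Qf x ^ ((1:ℝ)/(d:ℝ))) ≤ A * N f := by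
      have hm : (∑ x, μ x * Qf x ^ (q/(d:ℝ))) ^ (1/q) ≤ A * N f := by
        have h0 := hmain f hf
        simpa only [hQfdef] using h0
      rcases eq_or_lt_of_le hq with hq1 | hq1
      · -- q = 1
        rw [← hq1] at hm
        rw [show (1:ℝ)/1 = 1 by norm_num, Real.rpow_one] at hm
        refine le_trans ?_ hm
        refine Finset.sum_le_sum fun x _ => ?_
        have h1 : M x * Qf x ^ ((1:ℝ)/(d:ℝ)) ≤ Qf x ^ ((1:ℝ)/(d:ℝ)) :=
          mul_le_of_le_one_left (Real.rpow_nonneg (hQ0 x) _) (hM1 hq1.symm x)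
        exact mul_le_mul_of_nonneg_left h1 (hμ x)
      · -- q > 1
        have hq0 : (0:ℝ) < q := lt_trans one_pos hq1
        have hconj : Real.HolderConjugate (q/(q-1)) q := by
          rw [Real.holderConjugate_iff]
          constructor
          · rw [lt_div_iff₀ (by linarith)]; linarith
          · rw [inv_div]
            field_simp
            ring
        have hH := holder_w μ M (fun x => Qf x ^ ((1:ℝ)/(d:ℝ))) hμ hM0
          (fun x => Real.rpow_nonneg (hQ0 x) _) hconj
        have hMfac : (∑ x, μ x * M x ^ (q/(q-1))) ^ (1/(q/(q-1))) ≤ 1 := by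
          have : (1:ℝ)/(q/(q-1)) = (q-1)/q := one_div_div _ _
          rw [this]
          exact hMq hq1
        have hQfac : (∑ x, μ x * (Qf x ^ ((1:ℝ)/(d:ℝ))) ^ q) ^ (1/q) ≤ A * N f := by
          have hrw : ∀ x : X, (Qf x ^ ((1:ℝ)/(d:ℝ))) ^ q = Qf x ^ (q/(d:ℝ)) := by
            intro x
            rw [← Real.rpow_mul (hQ0 x), one_div_mul_eq_div]
          calc (∑ x, μ x * (Qf x ^ ((1:ℝ)/(d:ℝ))) ^ q) ^ (1/q)
              = (∑ x, μ x * Qf x ^ (q/(d:ℝ))) ^ (1/q) := by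
                congr 1
                exact Finset.sum_congr rfl fun x _ => by rw [hrw x]
            _ ≤ A * N f := hm
        calc ∑ x, μ x * (M x * Qf x ^ ((1:ℝ)/(d:ℝ)))
            ≤ (∑ x, μ x * M x ^ (q/(q-1))) ^ (1/(q/(q-1)))
              * (∑ x, μ x * (Qf x ^ ((1:ℝ)/(d:ℝ))) ^ q) ^ (1/q) := hH
          _ ≤ 1 * (∑ x, μ x * (Qf x ^ ((1:ℝ)/(d:ℝ))) ^ q) ^ (1/q) := by
              refine mul_le_mul_of_nonneg_right hMfac ?_
              exact Real.rpow_nonneg (Finset.sum_nonneg fun x _ =>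
                mul_nonneg (hμ x) (Real.rpow_nonneg (Real.rpow_nonneg (hQ0 x) _) _)) _
          _ = (∑ x, μ x * (Qf x ^ ((1:ℝ)/(d:ℝ))) ^ q) ^ (1/q) := one_mul _
          _ ≤ A * N f := hQfac
    refine ⟨fun x y => M x * c x * S x y, ?_, ?_, ?_⟩
    · intro x y
      exact mul_nonneg (mul_nonneg (hM0 x) (le_trans zero_le_one (hc1 x))) (hS0 x y)
    · intro x yv
      have hprod : ∏ j, (M x * c x * S x (yv j)) = (M x * c x) ^ d * ∏ j, S x (yv j) := by
        rw [Finset.prod_mul_distrib, Finset.prod_const, Finset.card_univ, Fintype.card_fin]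
      rw [hprod]
      have hS0' : (0:ℝ) ≤ ∏ j, S x (yv j) := Finset.prod_nonneg fun j _ => hS0 x _
      calc M x ^ d * K x yv ≤ M x ^ d * ∏ j, S x (yv j) :=
            mul_le_mul_of_nonneg_left (hSK x yv) (pow_nonneg (hM0 x) d)
        _ ≤ c x ^ d * (M x ^ d * ∏ j, S x (yv j)) :=
            le_mul_of_one_le_left (mul_nonneg (pow_nonneg (hM0 x) d) hS0')
              (one_le_pow₀ (hc1 x))
        _ = (M x * c x) ^ d * ∏ j, S x (yv j) := by rw [mul_pow]; ring
    · have hxle : ∀ x, ∑ y, (M x * c x * S x y) * f y ≤ M x * (B * Qf x ^ ((1:ℝ)/(d:ℝ))) := by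
        intro x
        have hEq : ∑ y, (M x * c x * S x y) * f y = M x * (c x * s x) := by
          rw [hsdef]
          simp only []
          rw [Finset.mul_sum, Finset.mul_sum]
          exact Finset.sum_congr rfl fun y _ => by ring
        rw [hEq]
        exact mul_le_mul_of_nonneg_left (hkey x) (hM0 x)
      calc ∑ x, μ x * ∑ y, (M x * c x * S x y) * f y
          ≤ ∑ x, μ x * (M x * (B * Qf x ^ ((1:ℝ)/(d:ℝ)))) :=
            Finset.sum_le_sum fun x _ => mul_le_mul_of_nonneg_left (hxle x) (hμ x)
        _ = B * ∑ x, μ x * (M x * Qf x ^ ((1:ℝ)/(d:ℝ))) := by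
            rw [Finset.mul_sum]
            exact Finset.sum_congr rfl fun x _ => by ring
        _ ≤ B * (A * N f) := mul_le_mul_of_nonneg_left hmainM hB.le
        _ = A * B * N f := by ring
  -- a fixed admissible g
  obtain ⟨g₀, hg₀0, hg₀K, -⟩ := step1 (fun _ => 0) (fun _ => le_rfl)
  set Lam : (X → Y → ℝ) → (Y → ℝ) := fun g y => ∑ x, μ x * g x y with hLamdef
  set P : Set (Y → ℝ) := {p | ∃ g : X → Y → ℝ, (∀ x y, 0 ≤ g x y) ∧
      (∀ x (yv : Fin d → Y), M x ^ d * K x yv ≤ ∏ j, g x (yv j)) ∧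
      ∀ y, Lam g y ≤ p y} with hPdef
  have hPconv : Convex ℝ P := by
    intro p₁ hp₁ p₂ hp₂ a b ha hb hab
    obtain ⟨g₁, hg₁0, hg₁K, hg₁L⟩ := hp₁
    obtain ⟨g₂, hg₂0, hg₂K, hg₂L⟩ := hp₂
    refine ⟨fun x y => a * g₁ x y + b * g₂ x y, ?_, ?_, ?_⟩
    · intro x y
      exact add_nonneg (mul_nonneg ha (hg₁0 x y)) (mul_nonneg hb (hg₂0 x y))
    · intro x yv
      have hMK : (0:ℝ) ≤ M x ^ d * K x yv := mul_nonneg (pow_nonneg (hM0 x) d) (hK x yv)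
      calc M x ^ d * K x yv
          = (M x ^ d * K x yv) ^ a * (M x ^ d * K x yv) ^ b := by
            rw [← Real.rpow_add' hMK (by rw [hab]; norm_num), hab, Real.rpow_one]
        _ ≤ (∏ j, g₁ x (yv j)) ^ a * (∏ j, g₂ x (yv j)) ^ b := by
            refine mul_le_mul (Real.rpow_le_rpow hMK (hg₁K x yv) ha)
              (Real.rpow_le_rpow hMK (hg₂K x yv) hb)
              (Real.rpow_nonneg hMK b)
              (Real.rpow_nonneg (Finset.prod_nonneg fun j _ => hg₁0 x _) a)
        _ = ∏ j, ((g₁ x (yv j)) ^ a * (g₂ x (yv j)) ^ b) := by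
            rw [← Real.finset_prod_rpow _ _ (fun j _ => hg₁0 x _) a,
              ← Real.finset_prod_rpow _ _ (fun j _ => hg₂0 x _) b,
              ← Finset.prod_mul_distrib]
        _ ≤ ∏ j, (a * g₁ x (yv j) + b * g₂ x (yv j)) := by
            refine Finset.prod_le_prod (fun j _ => mul_nonneg
              (Real.rpow_nonneg (hg₁0 x _) a) (Real.rpow_nonneg (hg₂0 x _) b))
              (fun j _ => Real.geom_mean_le_arith_mean2_weighted ha hb
                (hg₁0 x _) (hg₂0 x _) hab)
    · intro y
      have hLeq : Lam (fun x y => a * g₁ x y + b * g₂ x y) y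
          = a * Lam g₁ y + b * Lam g₂ y := by
        rw [hLamdef]
        simp only []
        rw [Finset.mul_sum, Finset.mul_sum, ← Finset.sum_add_distrib]
        exact Finset.sum_congr rfl fun x _ => by ring
      rw [hLeq]
      have : (a • p₁ + b • p₂) y = a * p₁ y + b * p₂ y := by
        simp [smul_eq_mul]
      rw [this]
      exact add_le_add (mul_le_mul_of_nonneg_left (hg₁L y) ha)
        (mul_le_mul_of_nonneg_left (hg₂L y) hb)
  -- linearity of functionals against coordinates
  have hlinL : ∀ (ψ : (Y → ℝ) →ₗ[ℝ] ℝ) (u : Y → ℝ),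
      ψ u = ∑ y, u y * ψ (Pi.single y 1) := by
    intro ψ u
    conv_lhs => rw [← Finset.univ_sum_single u]
    rw [map_sum]
    refine Finset.sum_congr rfl fun y _ => ?_
    have h1 : Pi.single y (u y) = u y • (Pi.single y (1:ℝ) : Y → ℝ) := by
      funext z
      simp only [Pi.smul_apply, smul_eq_mul, Pi.single_apply]
      by_cases hz : z = y <;> simp [hz]
    rw [h1, map_smul, smul_eq_mul]
  -- LEMMA A : some point of (closure P) obeys the dual bound
  have lemA : ∃ p ∈ closure P, ∀ f : Y → ℝ, (∀ y, 0 ≤ f y) → N f ≤ 1 →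
      ∑ y, p y * f y ≤ A * B := by
    by_contra hcon
    push_neg at hcon
    set W : Set (Y → ℝ) :=
      {w | (∀ y, 0 ≤ w y) ∧ ∀ f : Y → ℝ, (∀ y, 0 ≤ f y) → N f ≤ 1 →
        ∑ y, w y * f y ≤ A * B} with hWdef
    have hW0 : (0 : Y → ℝ) ∈ W := by
      constructor
      · intro y; exact le_rfl
      · intro f hf hNf
        simp only [Pi.zero_apply, zero_mul, Finset.sum_const_zero]
        exact hcpos.le
    have hWconv : Convex ℝ W := by
      intro w₁ hw₁ w₂ hw₂ a b ha hb hab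
      constructor
      · intro y
        have he : (a • w₁ + b • w₂) y = a * w₁ y + b * w₂ y := by simp [smul_eq_mul]
        rw [he]
        exact add_nonneg (mul_nonneg ha (hw₁.1 y)) (mul_nonneg hb (hw₂.1 y))
      · intro f hf hNf
        have hEq : ∑ y, (a • w₁ + b • w₂) y * f y
            = a * (∑ y, w₁ y * f y) + b * (∑ y, w₂ y * f y) := by
          rw [Finset.mul_sum, Finset.mul_sum, ← Finset.sum_add_distrib]
          refine Finset.sum_congr rfl fun y _ => ?_
          have he : (a • w₁ + b • w₂) y = a * w₁ y + b * w₂ y := by simp [smul_eq_mul]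
          rw [he]; ring
        rw [hEq]
        calc a * (∑ y, w₁ y * f y) + b * (∑ y, w₂ y * f y)
            ≤ a * (A*B) + b * (A*B) :=
              add_le_add (mul_le_mul_of_nonneg_left (hw₁.2 f hf hNf) ha)
                (mul_le_mul_of_nonneg_left (hw₂.2 f hf hNf) hb)
          _ = A*B := by rw [← add_mul, hab, one_mul]
    have hNe : ∀ y : Y, 0 < N (Pi.single y (1:ℝ)) := by
      intro y
      refine lt_of_le_of_ne (hN_nonneg _) (fun h0 => ?_)
      have h1 := congrFun (hN_defin _ h0.symm) y
      rw [Pi.single_eq_same] at h1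
      exact one_ne_zero h1
    have hWsub : W ⊆ Set.Icc (0 : Y → ℝ) (fun y => N (Pi.single y (1:ℝ)) * (A*B)) := by
      intro w hw
      constructor
      · intro y; exact hw.1 y
      · intro y
        set e : Y → ℝ := fun z => (N (Pi.single y (1:ℝ)))⁻¹ * (Pi.single y (1:ℝ) : Y → ℝ) z with hedef
        have he0 : ∀ z, 0 ≤ e z := by
          intro z
          refine mul_nonneg (inv_nonneg.2 (hN_nonneg _)) ?_
          rw [Pi.single_apply]
          split <;> norm_num
        have heN : N e ≤ 1 := by
          have he : e = (N (Pi.single y (1:ℝ)))⁻¹ • (Pi.single y (1:ℝ) : Y → ℝ) := rfl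
          rw [he, hN_smul, abs_of_nonneg (inv_nonneg.2 (hN_nonneg _)),
            inv_mul_cancel₀ (hNe y).ne']
        have hb2 := hw.2 e he0 heN
        have hs : ∑ z, w z * e z = (N (Pi.single y (1:ℝ)))⁻¹ * w y := by
          rw [hedef]
          simp only []
          rw [Finset.sum_eq_single y
            (fun z _ hz => by rw [Pi.single_eq_of_ne hz]; ring)
            (fun hy => absurd (Finset.mem_univ y) hy)]
          rw [Pi.single_eq_same]; ring
        rw [hs] at hb2
        have h3 := mul_le_mul_of_nonneg_left hb2 (hNe y).le
        rw [← mul_assoc, mul_inv_cancel₀ (hNe y).ne', one_mul] at h3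
        exact h3
    have hWcomp : IsCompact W := by
      have hWclosed : IsClosed W := by
        have hWeq : W = {w : Y → ℝ | ∀ y, 0 ≤ w y} ∩
            ⋂ (f : {f : Y → ℝ // (∀ y, 0 ≤ f y) ∧ N f ≤ 1}),
              {w : Y → ℝ | ∑ y, w y * (f : Y → ℝ) y ≤ A*B} := by
          ext w
          simp only [hWdef, Set.mem_setOf_eq, Set.mem_inter_iff, Set.mem_iInter,
            Subtype.forall]
          constructor
          · rintro ⟨h1, h2⟩; exact ⟨h1, fun f hf => h2 f hf.1 hf.2⟩
          · rintro ⟨h1, h2⟩; exact ⟨h1, fun f hf hNf => h2 f ⟨hf, hNf⟩⟩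
        rw [hWeq]
        refine IsClosed.inter ?_ (isClosed_iInter fun f => ?_)
        · have he : {w : Y → ℝ | ∀ y, 0 ≤ w y} = ⋂ (y : Y), {w : Y → ℝ | 0 ≤ w y} := by
            ext w; simp [Set.mem_iInter]
          rw [he]
          exact isClosed_iInter fun y => isClosed_le continuous_const (continuous_apply y)
        · exact isClosed_le (continuous_finset_sum _ fun y _ =>
            (continuous_apply y).mul continuous_const) continuous_const
      exact IsCompact.of_isClosed_subset isCompact_Icc hWclosed hWsub
    have hdisj : Disjoint W (closure P) := by
      rw [Set.disjoint_left]
      intro w hwW hwP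
      obtain ⟨f, hf, hNf, hlt⟩ := hcon w hwP
      exact absurd (hwW.2 f hf hNf) (not_le.2 hlt)
    obtain ⟨φ, u, v, hWu, huv, hPv⟩ :=
      geometric_hahn_banach_compact_closed hWconv hWcomp hPconv.closure
        isClosed_closure hdisj
    set h : Y → ℝ := fun y => φ (Pi.single y 1) with hhdef
    have hφ : ∀ w : Y → ℝ, φ w = ∑ y, w y * h y := by
      intro w
      have h1 := hlinL (φ.toLinearMap) w
      simpa using h1
    have hp₀ : Lam g₀ ∈ closure P :=
      subset_closure ⟨g₀, hg₀0, hg₀K, fun y => le_rfl⟩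
    have hh0 : ∀ y, 0 ≤ h y := by
      intro y
      show 0 ≤ φ (Pi.single y 1)
      by_contra hy
      push_neg at hy
      set t : ℝ := (φ (Lam g₀) - v + 1) / (-(φ (Pi.single y 1))) with htdef
      have hvp : v < φ (Lam g₀) := hPv _ hp₀
      have htpos : 0 ≤ t := div_nonneg (by linarith) (by linarith)
      have hmem : (Lam g₀ + t • (Pi.single y (1:ℝ) : Y → ℝ)) ∈ closure P := by
        refine subset_closure ⟨g₀, hg₀0, hg₀K, fun z => ?_⟩
        have he : (Lam g₀ + t • (Pi.single y (1:ℝ) : Y → ℝ)) z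
            = Lam g₀ z + t * (Pi.single y (1:ℝ) : Y → ℝ) z := by
          simp [smul_eq_mul]
        rw [he]
        refine le_add_of_nonneg_right (mul_nonneg htpos ?_)
        rw [Pi.single_apply]; split <;> norm_num
      have hv2 := hPv _ hmem
      rw [map_add, map_smul, smul_eq_mul] at hv2
      have hca : t * (-(φ (Pi.single y 1))) = φ (Lam g₀) - v + 1 :=
        div_mul_cancel₀ _ (by linarith : -(φ (Pi.single y 1)) ≠ 0)
      nlinarith
    have hhne : h ≠ 0 := by
      intro h0
      have h1 : φ (Lam g₀) = 0 := by
        rw [hφ]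
        refine Finset.sum_eq_zero fun y _ => ?_
        have h2 := congrFun h0 y
        simp only [Pi.zero_apply] at h2
        rw [h2, mul_zero]
      have h2 := hWu 0 hW0
      rw [map_zero] at h2
      have h3 := hPv _ hp₀
      rw [h1] at h3
      linarith
    have hNh : 0 < N h :=
      lt_of_le_of_ne (hN_nonneg h) (fun h0 => hhne (hN_defin h h0.symm))
    have hfdom : ∀ z : (LinearPMap.mkSpanSingleton (K := ℝ) (L := ℝ) (σ := RingHom.id ℝ) h (N h) hhne).domain,
        (LinearPMap.mkSpanSingleton (K := ℝ) (L := ℝ) (σ := RingHom.id ℝ) h (N h) hhne) z ≤ N z := by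
      intro z
      obtain ⟨t, ht⟩ := Submodule.mem_span_singleton.1 z.2
      have hz : z = ⟨t • h, Submodule.smul_mem _ t (Submodule.mem_span_singleton_self h)⟩ :=
        Subtype.ext ht.symm
      rw [hz, LinearPMap.mkSpanSingleton'_apply]
      show t • N h ≤ N (t • h)
      rw [smul_eq_mul, hN_smul]
      exact mul_le_mul_of_nonneg_right (le_abs_self t) (hN_nonneg h)
    obtain ⟨ψ, hψeq, hψle⟩ := exists_extension_of_le_sublinear
      (LinearPMap.mkSpanSingleton (K := ℝ) (L := ℝ) (σ := RingHom.id ℝ) h (N h) hhne) N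
      (fun r hr x => by rw [hN_smul, abs_of_pos hr]) hN_add hfdom
    have hψh : ψ h = N h := by
      have h1 := hψeq ⟨h, Submodule.mem_span_singleton_self h⟩
      rw [LinearPMap.mkSpanSingleton_apply] at h1
      exact h1
    have hψlin : ∀ u : Y → ℝ, ψ u = ∑ y, u y * ψ (Pi.single y 1) := fun u => hlinL ψ u
    set w : Y → ℝ := fun y => (A*B) * max (ψ (Pi.single y 1)) 0 with hwdef
    have hwW : w ∈ W := by
      constructor
      · intro y; exact mul_nonneg hcpos.le (le_max_right _ _)
      · intro f hf hNf
        set uf : Y → ℝ := fun y => if 0 ≤ ψ (Pi.single y 1) then f y else 0 with hufdef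
        have h1 : ∑ y, w y * f y = (A*B) * ψ uf := by
          rw [hψlin uf, Finset.mul_sum]
          refine Finset.sum_congr rfl fun y _ => ?_
          rw [hwdef, hufdef]
          simp only []
          by_cases hy : 0 ≤ ψ (Pi.single y 1)
          · rw [if_pos hy, max_eq_left hy]; ring
          · rw [if_neg hy, max_eq_right (le_of_not_ge hy)]; ring
        have h2 : N uf ≤ N f := by
          refine hN_lattice _ _ fun y => ?_
          rw [hufdef]
          simp only []
          split
          · exact le_rfl
          · simp [abs_nonneg]
        calc ∑ y, w y * f y = (A*B) * ψ uf := h1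
          _ ≤ (A*B) * N f := mul_le_mul_of_nonneg_left ((hψle uf).trans h2) hcpos.le
          _ ≤ (A*B) * 1 := mul_le_mul_of_nonneg_left hNf hcpos.le
          _ = A*B := mul_one _
    have hl : (A*B) * N h ≤ φ w := by
      rw [hφ w]
      calc (A*B) * N h = (A*B) * ψ h := by rw [hψh]
        _ = (A*B) * ∑ y, h y * ψ (Pi.single y 1) := by rw [hψlin h]
        _ = ∑ y, (A*B) * (h y * ψ (Pi.single y 1)) := Finset.mul_sum _ _ _
        _ ≤ ∑ y, w y * h y := by
            refine Finset.sum_le_sum fun y _ => ?_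
            rw [hwdef]
            simp only []
            have hm := mul_le_mul_of_nonneg_right
              (le_max_left (ψ (Pi.single y 1)) 0) (hh0 y)
            calc (A*B) * (h y * ψ (Pi.single y 1))
                = (A*B) * (ψ (Pi.single y 1) * h y) := by ring
              _ ≤ (A*B) * (max (ψ (Pi.single y 1)) 0 * h y) :=
                  mul_le_mul_of_nonneg_left hm hcpos.le
              _ = (A*B) * max (ψ (Pi.single y 1)) 0 * h y := by ring
    set fh : Y → ℝ := fun y => (N h)⁻¹ * h y with hfhdef
    have hfh0 : ∀ y, 0 ≤ fh y := fun y => mul_nonneg (inv_nonneg.2 (hN_nonneg h)) (hh0 y)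
    have hNfh : N fh ≤ 1 := by
      have he : fh = (N h)⁻¹ • h := rfl
      rw [he, hN_smul, abs_of_nonneg (inv_nonneg.2 (hN_nonneg h)), inv_mul_cancel₀ hNh.ne']
    obtain ⟨g₁, hg₁0, hg₁K, hg₁b⟩ := step1 fh hfh0
    have hp₁ : Lam g₁ ∈ closure P := subset_closure ⟨g₁, hg₁0, hg₁K, fun y => le_rfl⟩
    have hr : φ (Lam g₁) ≤ N h * (A * B) := by
      rw [hφ (Lam g₁)]
      have hyh : ∀ y, h y = N h * fh y := by
        intro y
        rw [hfhdef]
        simp only []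
        rw [← mul_assoc, mul_inv_cancel₀ hNh.ne', one_mul]
      have hsum : ∑ y, Lam g₁ y * h y = N h * ∑ x, μ x * ∑ y, g₁ x y * fh y := by
        calc ∑ y, Lam g₁ y * h y = ∑ y, ∑ x, (μ x * g₁ x y) * h y := by
              refine Finset.sum_congr rfl fun y _ => ?_
              rw [hLamdef]
              simp only []
              rw [Finset.sum_mul]
          _ = ∑ x, ∑ y, (μ x * g₁ x y) * h y := Finset.sum_comm
          _ = ∑ x, N h * (μ x * ∑ y, g₁ x y * fh y) := by
              refine Finset.sum_congr rfl fun x _ => ?_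
              rw [Finset.mul_sum, Finset.mul_sum]
              refine Finset.sum_congr rfl fun y _ => ?_
              rw [hyh y]; ring
          _ = N h * ∑ x, μ x * ∑ y, g₁ x y * fh y := by
              rw [← Finset.mul_sum]
      rw [hsum]
      have hin : ∑ x, μ x * ∑ y, g₁ x y * fh y ≤ A * B := by
        calc ∑ x, μ x * ∑ y, g₁ x y * fh y ≤ A * B * N fh := hg₁b
          _ ≤ A * B * 1 := mul_le_mul_of_nonneg_left hNfh hcpos.le
          _ = A * B := mul_one _
      exact mul_le_mul_of_nonneg_left hin (hN_nonneg h)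
    have hc2 : φ w < u := hWu w hwW
    have hc3 : v < φ (Lam g₁) := hPv _ hp₁
    have hcomm : N h * (A*B) = (A*B) * N h := mul_comm _ _
    linarith
  -- LEMMA B : points of closure P are dominated by genuine admissible g
  have lemB : ∀ p ∈ closure P, ∃ g : X → Y → ℝ, (∀ x y, 0 ≤ g x y) ∧
      (∀ x (yv : Fin d → Y), M x ^ d * K x yv ≤ ∏ j, g x (yv j)) ∧
      ∀ y, Lam g y ≤ p y := by
    intro p hp
    set hi : X → Y → ℝ := fun x y => if μ x = 0 then g₀ x y else (p y + 1) / μ x with hhidef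
    set KK : Set (X → Y → ℝ) := {g | g ∈ Set.Icc 0 hi ∧
        ((∀ x (yv : Fin d → Y), M x ^ d * K x yv ≤ ∏ j, g x (yv j)) ∧
         (∀ x, μ x = 0 → g x = g₀ x))} with hKKdef
    have hwit : ∀ ε : ℝ, 0 < ε → ε ≤ 1 → ∃ g ∈ KK, ∀ y, Lam g y ≤ p y + ε := by
      intro ε hε hε1
      obtain ⟨p', hp'P, hp'd⟩ := Metric.mem_closure_iff.1 hp ε hε
      obtain ⟨g', hg'0, hg'K, hg'L⟩ := hp'P
      have hclose : ∀ y, p' y ≤ p y + ε := by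
        intro y
        have h1 := dist_le_pi_dist p p' y
        rw [Real.dist_eq] at h1
        have h2 : |p y - p' y| < ε := lt_of_le_of_lt h1 hp'd
        have h3 := abs_lt.1 h2
        linarith [h3.1]
      refine ⟨fun x => if μ x = 0 then g₀ x else g' x, ⟨⟨?_, ?_⟩, ?_, ?_⟩, ?_⟩
      · refine Pi.le_def.2 fun x => Pi.le_def.2 fun y => ?_
        show (0:ℝ) ≤ (if μ x = 0 then g₀ x else g' x) y
        by_cases hx : μ x = 0
        · rw [if_pos hx]; exact hg₀0 x y
        · rw [if_neg hx]; exact hg'0 x y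
      · refine Pi.le_def.2 fun x => Pi.le_def.2 fun y => ?_
        show (if μ x = 0 then g₀ x else g' x) y
            ≤ (if μ x = 0 then g₀ x y else (p y + 1) / μ x)
        by_cases hx : μ x = 0
        · rw [if_pos hx, if_pos hx]
        · rw [if_neg hx, if_neg hx]
          have hμx : 0 < μ x := lt_of_le_of_ne (hμ x) (Ne.symm hx)
          rw [le_div_iff₀ hμx]
          have h4 : μ x * g' x y ≤ Lam g' y := by
            rw [hLamdef]
            simp only []
            exact Finset.single_le_sum (f := fun x' => μ x' * g' x' y)
              (fun x' _ => mul_nonneg (hμ x') (hg'0 x' y)) (Finset.mem_univ x)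
          calc g' x y * μ x = μ x * g' x y := mul_comm _ _
            _ ≤ Lam g' y := h4
            _ ≤ p' y := hg'L y
            _ ≤ p y + ε := hclose y
            _ ≤ p y + 1 := by linarith
      · intro x yv
        by_cases hx : μ x = 0
        · simp only [if_pos hx]
          exact hg₀K x yv
        · simp only [if_neg hx]
          exact hg'K x yv
      · intro x hx
        show (if μ x = 0 then g₀ x else g' x) = g₀ x
        rw [if_pos hx]
      · intro y
        have hL : Lam (fun x => if μ x = 0 then g₀ x else g' x) y = Lam g' y := by
          rw [hLamdef]
          simp only []
          refine Finset.sum_congr rfl fun x _ => ?_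
          by_cases hx : μ x = 0
          · rw [hx]; ring
          · rw [if_neg hx]
        rw [hL]
        exact (hg'L y).trans (hclose y)
    have hKKclosed : IsClosed KK := by
      have hKKeq : KK = Set.Icc 0 hi ∩
          ((⋂ (x : X) (yv : Fin d → Y),
            {g : X → Y → ℝ | M x ^ d * K x yv ≤ ∏ j, g x (yv j)}) ∩
           ⋂ (x : X) (_ : μ x = 0), {g : X → Y → ℝ | g x = g₀ x}) := by
        ext g
        simp only [hKKdef, Set.mem_setOf_eq, Set.mem_inter_iff, Set.mem_iInter]
      rw [hKKeq]
      refine IsClosed.inter isClosed_Icc (IsClosed.inter ?_ ?_)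
      · refine isClosed_iInter fun x => isClosed_iInter fun yv => ?_
        refine isClosed_le continuous_const ?_
        exact continuous_finset_prod _ fun j _ =>
          (continuous_apply (yv j)).comp (continuous_apply x)
      · exact isClosed_iInter fun x => isClosed_iInter fun _ =>
          isClosed_eq (continuous_apply x) continuous_const
    have hKKcomp : IsCompact KK :=
      IsCompact.of_isClosed_subset isCompact_Icc hKKclosed fun g hg => hg.1
    obtain ⟨g1, hg1KK, hg1b⟩ := hwit 1 one_pos le_rfl
    have hKKne : KK.Nonempty := ⟨g1, hg1KK⟩
    have hFcont : Continuous (fun g : X → Y → ℝ => ∑ y, max (Lam g y - p y) 0) := by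
      show Continuous (fun g : X → Y → ℝ => ∑ y, max ((∑ x, μ x * g x y) - p y) 0)
      refine continuous_finset_sum _ fun y _ => Continuous.max ?_ continuous_const
      refine Continuous.sub ?_ continuous_const
      exact continuous_finset_sum _ fun x _ =>
        continuous_const.mul ((continuous_apply y).comp (continuous_apply x))
    obtain ⟨gm, hgmKK, hgmmin⟩ := hKKcomp.exists_isMinOn hKKne hFcont.continuousOn
    set F : (X → Y → ℝ) → ℝ := fun g => ∑ y, max (Lam g y - p y) 0 with hFdef
    have hmin0 : F gm ≤ 0 := by
      by_contra hpos
      push_neg at hpos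
      have hcard : (0:ℝ) < (Fintype.card Y : ℝ) := by
        exact_mod_cast Fintype.card_pos
      set ε : ℝ := min 1 (F gm / (2 * (Fintype.card Y : ℝ))) with hεdef
      have hεpos : 0 < ε := lt_min one_pos (div_pos hpos (by positivity))
      obtain ⟨gε, hgεKK, hgεb⟩ := hwit ε hεpos (min_le_left _ _)
      have h1 : F gε ≤ (Fintype.card Y : ℝ) * ε := by
        rw [hFdef]
        simp only []
        calc ∑ y, max (Lam gε y - p y) 0 ≤ ∑ _y : Y, ε :=
              Finset.sum_le_sum fun y _ => max_le (by linarith [hgεb y]) hεpos.le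
          _ = (Fintype.card Y : ℝ) * ε := by
              rw [Finset.sum_const, Finset.card_univ, nsmul_eq_mul]
      have h2 : F gm ≤ F gε := isMinOn_iff.1 hgmmin gε hgεKK
      have h3 : (Fintype.card Y : ℝ) * ε
          ≤ (Fintype.card Y : ℝ) * (F gm / (2 * (Fintype.card Y : ℝ))) :=
        mul_le_mul_of_nonneg_left (min_le_right _ _) hcard.le
      have h4 : (Fintype.card Y : ℝ) * (F gm / (2 * (Fintype.card Y : ℝ))) = F gm / 2 := by
        field_simp
      linarith
    refine ⟨gm, ?_, hgmKK.2.1, ?_⟩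
    · intro x y
      have h5 := Pi.le_def.1 (Pi.le_def.1 hgmKK.1.1 x) y
      simpa using h5
    · intro y
      have h6 : max (Lam gm y - p y) 0 ≤ F gm := by
        rw [hFdef]
        simp only []
        exact Finset.single_le_sum (f := fun y => max (Lam gm y - p y) 0)
          (fun y _ => le_max_right _ _) (Finset.mem_univ y)
      have h7 := le_max_left (Lam gm y - p y) 0
      linarith
  -- assemble
  obtain ⟨p, hpcl, hpb⟩ := lemA
  obtain ⟨g, hg0, hgK, hgΛ⟩ := lemB p hpcl
  refine ⟨g, hg0, hgK, ?_⟩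
  intro f hf
  have h1 : ∑ x, μ x * ∑ y, g x y * f y = ∑ y, Lam g y * f y := by
    calc ∑ x, μ x * ∑ y, g x y * f y = ∑ x, ∑ y, μ x * (g x y * f y) := by
          exact Finset.sum_congr rfl fun x _ => Finset.mul_sum _ _ _
      _ = ∑ y, ∑ x, μ x * (g x y * f y) := Finset.sum_comm
      _ = ∑ y, Lam g y * f y := by
          refine Finset.sum_congr rfl fun y _ => ?_
          rw [hLamdef]
          simp only []
          rw [Finset.sum_mul]
          exact Finset.sum_congr rfl fun x _ => by ring
  have h2 : ∑ y, Lam g y * f y ≤ ∑ y, p y * f y :=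
    Finset.sum_le_sum fun y _ => mul_le_mul_of_nonneg_right (hgΛ y) (hf y)
  rcases eq_or_lt_of_le (hN_nonneg f) with hNf | hNf
  · have hf0 : f = 0 := hN_defin f hNf.symm
    have hN0 : N f = 0 := hNf.symm
    rw [hf0]
    simp only [Pi.zero_apply, mul_zero, Finset.sum_const_zero]
    rw [hf0] at hN0
    rw [hN0, mul_zero]
  · have hfrac0 : ∀ y, 0 ≤ (N f)⁻¹ * f y :=
      fun y => mul_nonneg (inv_nonneg.2 (hN_nonneg f)) (hf y)
    have hNfrac : N (fun y => (N f)⁻¹ * f y) ≤ 1 := by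
      have : (fun y => (N f)⁻¹ * f y) = (N f)⁻¹ • f := rfl
      rw [this, hN_smul, abs_of_nonneg (inv_nonneg.2 (hN_nonneg f)),
        inv_mul_cancel₀ hNf.ne']
    have hpb' := hpb _ hfrac0 hNfrac
    have hsum : ∑ y, p y * ((N f)⁻¹ * f y) = (N f)⁻¹ * ∑ y, p y * f y := by
      rw [Finset.mul_sum]; exact Finset.sum_congr rfl fun y _ => by ring
    rw [hsum] at hpb'
    have := mul_le_mul_of_nonneg_left hpb' hNf.le
    rw [← mul_assoc, mul_inv_cancel₀ hNf.ne', one_mul] at this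
    calc ∑ x, μ x * ∑ y, g x y * f y ≤ ∑ y, p y * f y := by rw [h1]; exact h2
      _ ≤ N f * (A * B) := this
      _ = A * B * N f := by ring
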